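/- Let G = (N, Δ, π) be an infinite bottleneck congestion game and let 𝒜 = ℝ² be totally ordered by the ordinary lexicographical order ≤_lex (i.e., (a₁,a₂) <_lex (b₁,b₂) iff a₁ < b₁, or a₁ = b₁ and a₂ < b₂). Define φ : Δ → 𝒜^m by φ_f(ξ) = (c_f(ℓ_f(ξ)), ℓ_f(ξ)) for all f ∈ F. Then G has the 𝒜-LIP for φ: for every improving move (ξ, (ν_S, ξ_{−S})) of any nonempty coalition S ⊆ N, φ(ν_S, ξ_{−S}) is strictly 𝒜-sorted-lexicographically smaller than φ(ξ). -/

import Mathlib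

open Finset



/-- The vector `a` sorted in non-increasing order. -/
noncomputable def sortDesc {α : Type*} [LinearOrder α] {q : ℕ} (a : Fin q → α) : Fin q → α :=
  fun i => a (Tuple.sort a i.rev)

/-- `a` is strictly sorted-lexicographically smaller than `b`. -/
def SLexLt {α : Type*} [LinearOrder α] {q : ℕ} (a b : Fin q → α) : Prop :=
  ∃ m : Fin q, (∀ i, i < m → sortDesc a i = sortDesc b i) ∧ sortDesc a m < sortDesc b m

/-- Sorted-lexicographic comparison of vectors indexed by an arbitrary finite type. -/
def SLexLtOn {α : Type*} [LinearOrder α] {ι : Type*} [Fintype ι] (a b : ι → α) : Prop :=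
  SLexLt (a ∘ (Fintype.equivFin ι).symm) (b ∘ (Fintype.equivFin ι).symm)

/-- An improving move: some nonempty coalition `S` deviates (players outside `S`
keep their strategies) and every member of `S` strictly decreases her cost. -/
def ImprovingMove {ι : Type*} {X : ι → Type*} {β : Type*} [Preorder β]
    (π : (∀ i, X i) → ι → β) (x y : ∀ i, X i) : Prop :=
  ∃ S : Finset ι, S.Nonempty ∧ (∀ i ∉ S, y i = x i) ∧ ∀ i ∈ S, π y i < π x i

open scoped NNReal

/-- The load of facility `f` under a splittable strategy profile `ξ`:
the sum of all intensities put on pure strategies containing `f`. -/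
noncomputable def facLoad {ι F : Type*} [Fintype ι] [Fintype F] [DecidableEq F] {ni : ι → ℕ}
    (strat : ∀ i, Fin (ni i) → Finset F) (ξ : ∀ i, Fin (ni i) → ℝ≥0) (f : F) : ℝ≥0 :=
  ∑ i, ∑ j ∈ Finset.univ.filter (fun j => f ∈ strat i j), ξ i j

/-- The set `F_i(ξ)` of facilities used by player `i` under profile `ξ`. -/
noncomputable def usedFac {ι F : Type*} [Fintype F] [DecidableEq F] {ni : ι → ℕ}
    (strat : ∀ i, Fin (ni i) → Finset F) (ξ : ∀ i, Fin (ni i) → ℝ≥0) (i : ι) : Finset F :=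
  Finset.univ.filter (fun f => ∃ j, f ∈ strat i j ∧ 0 < ξ i j)

/-- The private (bottleneck) cost `π_i(ξ) = max_{f ∈ F_i(ξ)} c_f(ℓ_f(ξ))` of
player `i` in an infinite bottleneck congestion game. -/
noncomputable def btlCost {ι F : Type*} [Fintype ι] [Fintype F] [DecidableEq F] {ni : ι → ℕ}
    (c : F → ℝ≥0 → ℝ≥0) (strat : ∀ i, Fin (ni i) → Finset F)
    (ξ : ∀ i, Fin (ni i) → ℝ≥0) (i : ι) : ℝ≥0 :=
  (usedFac strat ξ i).sup (fun f => c f (facLoad strat ξ f))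

section Aux
variable {α : Type*} [LinearOrder α]

lemma sortDesc_anti {q : ℕ} (a : Fin q → α) : Antitone (sortDesc a) := by
  intro i j hij
  exact Tuple.monotone_sort a (Fin.rev_le_rev.mpr hij)

lemma cnt_sortDesc {q : ℕ} (a : Fin q → α) (s : α) :
    ((univ : Finset (Fin q)).filter fun i => s ≤ sortDesc a i).card
      = ((univ : Finset (Fin q)).filter fun i => s ≤ a i).card := by
  classical
  refine Finset.card_bij' (fun i _ => Tuple.sort a i.rev)
    (fun i _ => ((Tuple.sort a).symm i).rev) ?_ ?_ ?_ ?_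
  · intro i hi
    simp only [mem_filter, mem_univ, true_and] at hi ⊢
    exact hi
  · intro i hi
    simp only [mem_filter, mem_univ, true_and] at hi ⊢
    simpa [sortDesc, Fin.rev_rev] using hi
  · intro i _
    simp [Fin.rev_rev]
  · intro i _
    simp [Fin.rev_rev]

lemma antitone_le_iff {q : ℕ} {u : Fin q → α} (hu : Antitone u) (s : α) (i : Fin q) :
    s ≤ u i ↔ (i : ℕ) < ((univ : Finset (Fin q)).filter fun j => s ≤ u j).card := by
  classical
  constructor
  · intro h
    have hsub : Finset.Iic i ⊆ (univ : Finset (Fin q)).filter fun j => s ≤ u j := by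
      intro j hj
      simp only [mem_Iic] at hj
      simp only [mem_filter, mem_univ, true_and]
      exact le_trans h (hu hj)
    have := Finset.card_le_card hsub
    rw [Fin.card_Iic] at this
    omega
  · intro h
    by_contra hs
    push_neg at hs
    have hsub : ((univ : Finset (Fin q)).filter fun j => s ≤ u j) ⊆ Finset.Iio i := by
      intro j hj
      simp only [mem_filter, mem_univ, true_and] at hj
      simp only [mem_Iio]
      by_contra hji
      push_neg at hji
      exact absurd (le_trans hj (hu hji)) (not_le.mpr hs)
    have := Finset.card_le_card hsub
    rw [Fin.card_Iio] at this
    omega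

lemma slexLt_of_crit {q : ℕ} {a b : Fin q → α}
    (g : Fin q) (hg : a g ≠ b g)
    (h : ∀ f, a f ≠ b f → a f < b g ∧ b f ≤ b g) : SLexLt a b := by
  classical
  set v := b g with hv
  -- counting facts
  have fact1 : ((univ : Finset (Fin q)).filter fun i => v ≤ a i)
      ⊂ ((univ : Finset (Fin q)).filter fun i => v ≤ b i) := by
    constructor
    · intro i hi
      simp only [mem_filter, mem_univ, true_and] at hi ⊢
      by_cases hab : a i = b i
      · rwa [← hab]
      · exact absurd hi (not_le.mpr (h i hab).1)
    · intro hsub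
      have hgmem : g ∈ (univ : Finset (Fin q)).filter fun i => v ≤ b i := by
        simp [hv]
      have := hsub hgmem
      simp only [mem_filter, mem_univ, true_and] at this
      exact absurd this (not_le.mpr (h g hg).1)
  have fact2 : ∀ s : α, v < s →
      ((univ : Finset (Fin q)).filter fun i => s ≤ a i)
        = ((univ : Finset (Fin q)).filter fun i => s ≤ b i) := by
    intro s hs
    ext i
    simp only [mem_filter, mem_univ, true_and]
    by_cases hab : a i = b i
    · rw [hab]
    · constructor
      · intro hi; exact absurd (lt_of_lt_of_le ((h i hab).1.trans hs) hi) (lt_irrefl _)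
      · intro hi; exact absurd (lt_of_lt_of_le (lt_of_le_of_lt (h i hab).2 hs) hi) (lt_irrefl _)
  set cA := ((univ : Finset (Fin q)).filter fun i => v ≤ a i).card with hcA
  set cB := ((univ : Finset (Fin q)).filter fun i => v ≤ b i).card with hcB
  have hlt : cA < cB := Finset.card_lt_card fact1
  have hq : cA < q := by
    have : cB ≤ q := le_trans (Finset.card_filter_le _ _) (by simp)
    omega
  set m : Fin q := ⟨cA, hq⟩ with hm
  have hcntA : ∀ s : α, ((univ : Finset (Fin q)).filter fun i => s ≤ sortDesc a i).card
      = ((univ : Finset (Fin q)).filter fun i => s ≤ a i).card := cnt_sortDesc a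
  have hcntB : ∀ s : α, ((univ : Finset (Fin q)).filter fun i => s ≤ sortDesc b i).card
      = ((univ : Finset (Fin q)).filter fun i => s ≤ b i).card := cnt_sortDesc b
  refine ⟨m, ?_, ?_⟩
  · intro i him
    have hiA : v ≤ sortDesc a i := by
      rw [antitone_le_iff (sortDesc_anti a), hcntA]
      exact lt_of_lt_of_le him (by simp [hm, hcA])
    have hiB : v ≤ sortDesc b i := by
      rw [antitone_le_iff (sortDesc_anti b), hcntB]
      calc (i : ℕ) < cA := lt_of_lt_of_le him (by simp [hm])
        _ < cB := hlt
    refine le_antisymm ?_ ?_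
    · by_contra hlt'
      push_neg at hlt'
      have hs : v < sortDesc a i := lt_of_le_of_lt hiB hlt'
      have h1 : (i : ℕ) < ((univ : Finset (Fin q)).filter
          fun j => sortDesc a i ≤ sortDesc a j).card :=
        (antitone_le_iff (sortDesc_anti a) _ i).mp le_rfl
      rw [hcntA, fact2 _ hs, ← hcntB] at h1
      have := (antitone_le_iff (sortDesc_anti b) _ i).mpr h1
      exact absurd this (not_le.mpr hlt')
    · by_contra hlt'
      push_neg at hlt'
      have hs : v < sortDesc b i := lt_of_le_of_lt hiA hlt'
      have h1 : (i : ℕ) < ((univ : Finset (Fin q)).filter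
          fun j => sortDesc b i ≤ sortDesc b j).card :=
        (antitone_le_iff (sortDesc_anti b) _ i).mp le_rfl
      rw [hcntB, ← fact2 _ hs, ← hcntA] at h1
      have := (antitone_le_iff (sortDesc_anti a) _ i).mpr h1
      exact absurd this (not_le.mpr hlt')
  · have h1 : ¬ v ≤ sortDesc a m := by
      rw [antitone_le_iff (sortDesc_anti a), hcntA]
      simp [hm, hcA]
    have h2 : v ≤ sortDesc b m := by
      rw [antitone_le_iff (sortDesc_anti b), hcntB]
      simpa [hm] using hlt
    exact lt_of_lt_of_le (not_le.mp h1) h2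

lemma slexLtOn_of_crit {ι : Type*} [Fintype ι] {a b : ι → α}
    (g : ι) (hg : a g ≠ b g)
    (h : ∀ f, a f ≠ b f → a f < b g ∧ b f ≤ b g) : SLexLtOn a b := by
  refine slexLt_of_crit (Fintype.equivFin ι g) ?_ ?_
  · simpa using hg
  · intro f hf
    simpa using h ((Fintype.equivFin ι).symm f) hf

end Aux

/-- An infinite bottleneck congestion game has the 𝒜-LIP for
`𝒜 = ℝ²` with the ordinary lexicographical order and
`φ_f(ξ) = (c_f(ℓ_f(ξ)), ℓ_f(ξ))`. -/
theorem stmt_17 {ι F : Type*} [Fintype ι] [Nonempty ι] [Fintype F] [Nonempty F]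
    [DecidableEq F] {ni : ι → ℕ} (hni : ∀ i, 0 < ni i)
    (strat : ∀ i, Fin (ni i) → Finset F) (hstrat : ∀ i j, (strat i j).Nonempty)
    (d : ι → ℝ≥0) (hd : ∀ i, 0 < d i)
    (c : F → ℝ≥0 → ℝ≥0) (hc : ∀ f, Monotone (c f)) :
    ∀ ξ ν : ∀ i, Fin (ni i) → ℝ≥0,
      (∀ i, ∑ j, ξ i j = d i) → (∀ i, ∑ j, ν i j = d i) →
      ImprovingMove (btlCost c strat) ξ ν →
      SLexLtOn
        (fun f : F => (toLex ((c f (facLoad strat ν f) : ℝ), (facLoad strat ν f : ℝ)) : ℝ ×ₗ ℝ))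
        (fun f : F => (toLex ((c f (facLoad strat ξ f) : ℝ), (facLoad strat ξ f : ℝ)) : ℝ ×ₗ ℝ)) := by
  classical
  intro ξ ν hξd hνd hmov
  obtain ⟨S, hSne, hout, himp⟩ := hmov
  -- notation
  set ℓ : F → ℝ≥0 := facLoad strat ξ with hℓ
  set L : F → ℝ≥0 := facLoad strat ν with hL
  set A : F → ℝ ×ₗ ℝ := fun f => toLex ((c f (L f) : ℝ), (L f : ℝ)) with hA
  set B : F → ℝ ×ₗ ℝ := fun f => toLex ((c f (ℓ f) : ℝ), (ℓ f : ℝ)) with hB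
  -- the maximizing player
  obtain ⟨istar, hiS, hmax⟩ := S.exists_max_image (fun i => btlCost c strat ξ i) hSne
  have hνi : btlCost c strat ν istar < btlCost c strat ξ istar := himp _ hiS
  -- KEY helper: if some player strictly increases her contribution to f, then
  -- c f (L f) < btlCost c strat ξ istar
  have key : ∀ (f : F) (i0 : ι),
      (∑ j ∈ univ.filter fun j => f ∈ strat i0 j, ξ i0 j)
        < (∑ j ∈ univ.filter fun j => f ∈ strat i0 j, ν i0 j) →
      c f (L f) < btlCost c strat ξ istar := by
    intro f i0 hlt
    have hne : ν i0 ≠ ξ i0 := by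
      intro hEq
      rw [hEq] at hlt
      exact lt_irrefl _ hlt
    have hi0S : i0 ∈ S := by
      by_contra hno
      exact hne (hout i0 hno)
    obtain ⟨j, hjf, hjpos⟩ : ∃ j, f ∈ strat i0 j ∧ 0 < ν i0 j := by
      by_contra hno
      push_neg at hno
      have : (∑ j ∈ univ.filter fun j => f ∈ strat i0 j, ν i0 j) = 0 :=
        Finset.sum_eq_zero (fun j hj => by
          have := hno j (by simpa using hj)
          exact le_antisymm this zero_le)
      rw [this] at hlt
      exact absurd hlt (by simp)
    have hfuse : f ∈ usedFac strat ν i0 := by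
      simp only [usedFac, mem_filter, mem_univ, true_and]
      exact ⟨j, hjf, hjpos⟩
    have h1 : c f (L f) ≤ btlCost c strat ν i0 := by
      rw [hL]
      exact Finset.le_sup (f := fun f => c f (facLoad strat ν f)) hfuse
    exact lt_of_lt_of_le (lt_of_le_of_lt h1 (himp _ hi0S)) (hmax _ hi0S)
  -- used facilities of istar under ξ form a nonempty set
  have hused : (usedFac strat ξ istar).Nonempty := by
    obtain ⟨j, hj⟩ : ∃ j, 0 < ξ istar j := by
      by_contra hno
      push_neg at hno
      have hz : ∑ j, ξ istar j = 0 :=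
        Finset.sum_eq_zero (fun j _ => le_antisymm (hno j) zero_le)
      rw [hξd] at hz
      exact absurd hz (hd istar).ne'
    obtain ⟨f, hf⟩ := hstrat istar j
    refine ⟨f, ?_⟩
    simp only [usedFac, mem_filter, mem_univ, true_and]
    exact ⟨j, hf, hj⟩
  obtain ⟨g, hgU, hgsup⟩ := Finset.exists_mem_eq_sup' hused (fun f => c f (ℓ f))
  have hbtl : btlCost c strat ξ istar = c g (ℓ g) := by
    rw [btlCost, ← Finset.sup'_eq_sup hused, ← hℓ]
    exact hgsup
  -- g has a different φ-value under ν and ξ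
  have hgD : A g ≠ B g := by
    intro heq
    have hpair : ((c g (L g) : ℝ), (L g : ℝ)) = ((c g (ℓ g) : ℝ), (ℓ g : ℝ)) := by
      simpa [hA, hB, toLex_inj] using heq
    have hLg : L g = ℓ g := by
      have h2 : (L g : ℝ) = (ℓ g : ℝ) := congrArg Prod.snd hpair
      exact_mod_cast h2
    -- istar does not use g under ν
    have hnu : ∀ j, g ∈ strat istar j → ν istar j = 0 := by
      intro j hj
      by_contra hne0
      have hguse : g ∈ usedFac strat ν istar := by
        simp only [usedFac, mem_filter, mem_univ, true_and]
        exact ⟨j, hj, lt_of_le_of_ne zero_le (Ne.symm hne0)⟩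
      have h1 : c g (L g) ≤ btlCost c strat ν istar := by
        rw [hL]
        exact Finset.le_sup (f := fun f => c f (facLoad strat ν f)) hguse
      rw [hLg] at h1
      have := lt_of_le_of_lt h1 hνi
      rw [hbtl] at this
      exact lt_irrefl _ this
    -- istar's contribution to g strictly dropped
    have hdrop : (∑ j ∈ univ.filter fun j => g ∈ strat istar j, ν istar j)
        < ∑ j ∈ univ.filter fun j => g ∈ strat istar j, ξ istar j := by
      have hz : (∑ j ∈ univ.filter fun j => g ∈ strat istar j, ν istar j) = 0 :=
        Finset.sum_eq_zero (fun j hj => hnu j (by simpa using hj))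
      rw [hz]
      obtain ⟨j, hjg, hjpos⟩ : ∃ j, g ∈ strat istar j ∧ 0 < ξ istar j := by
        have := hgU
        simpa only [usedFac, mem_filter, mem_univ, true_and] using this
      exact Finset.sum_pos' (fun _ _ => zero_le) ⟨j, by simpa using hjg, hjpos⟩
    -- so some player increased her contribution to g
    obtain ⟨i, hi⟩ : ∃ i, (∑ j ∈ univ.filter fun j => g ∈ strat i j, ξ i j)
        < ∑ j ∈ univ.filter fun j => g ∈ strat i j, ν i j := by
      by_contra hno
      push_neg at hno
      have hsumlt : (∑ i, ∑ j ∈ univ.filter fun j => g ∈ strat i j, ν i j)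
          < ∑ i, ∑ j ∈ univ.filter fun j => g ∈ strat i j, ξ i j :=
        Finset.sum_lt_sum (fun i _ => hno i) ⟨istar, mem_univ _, hdrop⟩
      have : L g < ℓ g := by
        rw [hL, hℓ, facLoad, facLoad]
        exact hsumlt
      rw [hLg] at this
      exact lt_irrefl _ this
    have := key g i hi
    rw [hLg, hbtl] at this
    exact lt_irrefl _ this
  -- the maximum changed value
  set D : Finset F := univ.filter fun f => A f ≠ B f with hD
  have hDne : D.Nonempty := ⟨g, by simp [hD, hgD]⟩
  set v : ℝ ×ₗ ℝ := D.sup' hDne (fun f => max (A f) (B f)) with hv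
  have hmemD : ∀ f : F, A f ≠ B f → f ∈ D := by
    intro f hf; simp [hD, hf]
  have hvB : ∀ f, A f ≠ B f → B f ≤ v := fun f hf =>
    le_trans (le_max_right _ _) (Finset.le_sup' (fun f => max (A f) (B f)) (hmemD f hf))
  have hvA : ∀ f, A f ≠ B f → A f < v := by
    intro f hf
    have hAle : A f ≤ v := le_trans (le_max_left _ _) (Finset.le_sup' (fun f => max (A f) (B f)) (hmemD f hf))
    rcases lt_or_eq_of_le hAle with h | h
    · exact h
    exfalso
    have hBf : B f ≤ A f := h ▸ hvB f hf
    have hAB : B f < A f := lt_of_le_of_ne hBf (Ne.symm hf)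
    -- the load on f strictly increased
    have hload : ℓ f < L f := by
      by_contra hle
      push_neg at hle
      have h1 : c f (L f) ≤ c f (ℓ f) := hc f hle
      have : A f ≤ B f := by
        rw [hA, hB]
        rw [Prod.Lex.le_iff]
        rcases lt_or_eq_of_le (show (c f (L f) : ℝ) ≤ (c f (ℓ f) : ℝ) from by exact_mod_cast h1)
          with h2 | h2
        · exact Or.inl h2
        · exact Or.inr ⟨h2, by exact_mod_cast hle⟩
      exact absurd hAB (not_lt.mpr this)
    -- so some player increased her contribution to f
    obtain ⟨i, hi⟩ : ∃ i, (∑ j ∈ univ.filter fun j => f ∈ strat i j, ξ i j)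
        < ∑ j ∈ univ.filter fun j => f ∈ strat i j, ν i j := by
      by_contra hno
      push_neg at hno
      have hsle : L f ≤ ℓ f := by
        rw [hL, hℓ, facLoad, facLoad]
        exact Finset.sum_le_sum (fun i _ => hno i)
      exact absurd hload (not_lt.mpr hsle)
    have hcf := key f i hi
    rw [hbtl] at hcf
    have hAfBg : A f < B g := by
      rw [hA, hB, Prod.Lex.lt_iff]
      exact Or.inl (by exact_mod_cast hcf)
    have hBgv : B g ≤ v := hvB g hgD
    have hvv : v < v := by
      calc v = A f := h.symm
        _ < B g := hAfBg
        _ ≤ v := hBgv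
    exact lt_irrefl _ hvv
  -- the witness facility
  obtain ⟨fstar, hfD, hfv⟩ := Finset.exists_mem_eq_sup' hDne (fun f => max (A f) (B f))
  have hfne : A fstar ≠ B fstar := by
    have := hfD
    simpa [hD] using this
  have hvBf : v = B fstar := by
    rcases max_cases (A fstar) (B fstar) with ⟨h1, _⟩ | ⟨h1, _⟩
    · exfalso
      have := hvA fstar hfne
      rw [hv, hfv, h1] at this
      exact lt_irrefl _ this
    · rw [hv, hfv, h1]
  refine slexLtOn_of_crit fstar hfne ?_
  intro f hf
  exact ⟨hvBf ▸ hvA f hf, hvBf ▸ hvB f hf⟩
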